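/- Let p be an odd prime and k an integer with 1 \le k \le p-1. Then \lim_{g \to \infty} \big(D_p(g,k)\big)^{1/g} = 4\cos^2(\pi/(2p)). -/

import Mathlib

def binZ (n : ℕ) (j : ℤ) : ℤ := if 0 ≤ j then (n.choose j.toNat : ℤ) else 0

def catC (n : ℕ) (j : ℤ) : ℤ := binZ n j - binZ n (j - 1)

noncomputable def dP (p n k : ℕ) : ℤ :=
  if k % 2 = (n + 1) % 2 then ∑ᶠ s : ℤ, catC n (((n : ℤ) + 1 - k) / 2 + s * p) else 0

noncomputable def DP (p g k : ℕ) : ℤ :=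
  ∑ n ∈ Finset.range (g + 1), 2 ^ (g - n) * (g.choose n : ℤ) * dP p n k

lemma binZ_pascal (n : ℕ) (j : ℤ) : binZ (n + 1) j = binZ n j + binZ n (j - 1) := by
  unfold binZ
  rcases lt_trichotomy j 0 with h | h | h
  · rw [if_neg (by omega), if_neg (by omega), if_neg (by omega)]; ring
  · subst h; norm_num
  · rw [if_pos (by omega), if_pos (by omega), if_pos (by omega)]
    have h1 : j.toNat = (j - 1).toNat + 1 := by omega
    rw [h1, Nat.choose_succ_succ]
    push_cast; ring

lemma binZ_symm (n : ℕ) (j : ℤ) : binZ n ((n : ℤ) - j) = binZ n j := by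
  unfold binZ
  rcases lt_trichotomy j 0 with h | h | h
  · rw [if_pos (by omega), if_neg (by omega)]
    rw [Nat.choose_eq_zero_of_lt (by omega)]; simp
  · subst h; simp
  · by_cases h2 : (j : ℤ) ≤ n
    · rw [if_pos (by omega), if_pos (by omega)]
      have h3 : ((n:ℤ) - j).toNat = n - j.toNat := by omega
      rw [h3, Nat.choose_symm (by omega)]
    · rw [if_neg (by omega), if_pos (by omega)]
      rw [Nat.choose_eq_zero_of_lt (by omega)]; simp

lemma catC_pascal (n : ℕ) (j : ℤ) : catC (n + 1) j = catC n j + catC n (j - 1) := by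
  unfold catC; rw [binZ_pascal, binZ_pascal]; ring

lemma catC_reflect (n : ℕ) (j : ℤ) : catC n ((n : ℤ) + 1 - j) = -catC n j := by
  unfold catC
  have h1 : (n:ℤ) + 1 - j - 1 = (n:ℤ) - j := by ring
  have h2 : (n:ℤ) + 1 - j = (n:ℤ) - (j-1) := by ring
  rw [h1, h2, binZ_symm, binZ_symm]; ring

lemma catC_eq_zero (n : ℕ) (j : ℤ) (h : j < 0 ∨ (n:ℤ) + 1 < j) : catC n j = 0 := by
  unfold catC binZ
  rcases h with h | h
  · rw [if_neg (by omega), if_neg (by omega)]; ring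
  · rw [if_pos (by omega), if_pos (by omega),
      Nat.choose_eq_zero_of_lt (by omega), Nat.choose_eq_zero_of_lt (by omega)]
    ring

noncomputable def eAux (p n : ℕ) (m : ℤ) : ℤ := ∑ᶠ s : ℤ, catC n (m + s * p)

lemma eAux_support_finite (p n : ℕ) (hp : 0 < p) (m : ℤ) :
    (Function.support fun s : ℤ => catC n (m + s * p)).Finite := by
  have hsub : (Function.support fun s : ℤ => catC n (m + s * p)) ⊆
      (fun s : ℤ => m + s * p) ⁻¹' (Set.Icc 0 ((n : ℤ) + 1)) := by
    intro s hs
    simp only [Function.mem_support] at hs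
    simp only [Set.mem_preimage, Set.mem_Icc]
    by_contra h
    exact hs (catC_eq_zero n _ (by omega))
  refine Set.Finite.subset (Set.Finite.preimage ?_ (Set.finite_Icc _ _)) hsub
  intro a _ b _ hab
  have : (p:ℤ) ≠ 0 := by positivity
  simp only at hab
  exact mul_right_cancel₀ this (by omega)

lemma eAux_pascal (p n : ℕ) (hp : 0 < p) (m : ℤ) :
    eAux p (n + 1) m = eAux p n m + eAux p n (m - 1) := by
  unfold eAux
  rw [← finsum_add_distrib (eAux_support_finite p n hp m) (eAux_support_finite p n hp (m-1))]
  apply finsum_congr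
  intro s
  rw [catC_pascal]
  congr 1; ring_nf

lemma eAux_shift (p n : ℕ) (m : ℤ) : eAux p n (m + p) = eAux p n m := by
  unfold eAux
  rw [← finsum_comp_equiv (Equiv.addRight (1:ℤ)) (f := fun s : ℤ => catC n (m + s * p))]
  apply finsum_congr
  intro s
  simp only [Equiv.coe_addRight]
  congr 1; ring

lemma eAux_reflect (p n : ℕ) (m : ℤ) : eAux p n ((n:ℤ) + 1 - m) = - eAux p n m := by
  unfold eAux
  rw [← finsum_neg_distrib]
  rw [← finsum_comp_equiv (Equiv.neg ℤ) (f := fun s : ℤ => -catC n (m + s * p))]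
  apply finsum_congr
  intro s
  simp only [Equiv.neg_apply]
  rw [← catC_reflect]
  congr 1; ring

lemma dP_eq_eAux (p n k : ℕ) (h : k % 2 = (n + 1) % 2) :
    dP p n k = eAux p n (((n : ℤ) + 1 - k) / 2) := by
  unfold dP eAux; rw [if_pos h]

lemma dP_eq_zero_of_parity (p n k : ℕ) (h : ¬ k % 2 = (n + 1) % 2) : dP p n k = 0 := by
  unfold dP; rw [if_neg h]

lemma dP_zero_left (p n : ℕ) : dP p n 0 = 0 := by
  by_cases h : 0 % 2 = (n + 1) % 2
  · rw [dP_eq_eAux p n 0 h]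
    have h0 : ((n : ℤ) + 1 - (0:ℕ)) / 2 = ((n:ℤ) + 1) / 2 := by norm_num
    rw [h0]
    set m : ℤ := ((n : ℤ) + 1) / 2 with hm
    have hpar : ((n:ℤ) + 1) % 2 = 0 := by omega
    have h2 : (n:ℤ) + 1 - m = m := by omega
    have := eAux_reflect p n m
    rw [h2] at this
    omega
  · exact dP_eq_zero_of_parity p n 0 h

lemma dP_p_right (p n : ℕ) : dP p n p = 0 := by
  by_cases h : p % 2 = (n + 1) % 2
  · rw [dP_eq_eAux p n p h]
    set m : ℤ := ((n : ℤ) + 1 - p) / 2 with hm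
    have hpar : ((n:ℤ) + 1 - p) % 2 = 0 := by omega
    have h2 : (n:ℤ) + 1 - m = m + p := by omega
    have hr := eAux_reflect p n m
    rw [h2, eAux_shift] at hr
    omega
  · exact dP_eq_zero_of_parity p n p h

lemma dP_rec (p n k : ℕ) (hp : 0 < p) (hk : 1 ≤ k) :
    dP p (n + 1) k = dP p n (k - 1) + dP p n (k + 1) := by
  by_cases h : k % 2 = (n + 2) % 2
  · have h1 : (k - 1) % 2 = (n + 1) % 2 := by omega
    have h2 : (k + 1) % 2 = (n + 1) % 2 := by omega
    rw [dP_eq_eAux p (n+1) k (by omega), dP_eq_eAux p n (k-1) h1, dP_eq_eAux p n (k+1) h2]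
    have hpar : ((n:ℤ) + 2 - k) % 2 = 0 := by omega
    have e1 : ((n : ℤ) + 1 - (k-1:ℕ)) / 2 = ((n:ℤ) + 1 + 1 - k) / 2 := by
      congr 1; push_cast [hk]; ring_nf
    have e2 : ((n : ℤ) + 1 - (k+1:ℕ)) / 2 = ((n:ℤ) + 1 + 1 - k) / 2 - 1 := by
      push_cast; omega
    rw [e1, e2, ← eAux_pascal p n hp]
    push_cast
    ring_nf
  · have h1 : ¬ (k - 1) % 2 = (n + 1) % 2 := by omega
    have h2 : ¬ (k + 1) % 2 = (n + 1) % 2 := by omega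
    rw [dP_eq_zero_of_parity p (n+1) k (by omega), dP_eq_zero_of_parity p n (k-1) h1,
      dP_eq_zero_of_parity p n (k+1) h2]
    simp

lemma sum_rec (g : ℕ) (f : ℕ → ℤ) :
    ∑ n ∈ Finset.range (g + 2), 2 ^ (g + 1 - n) * ((g+1).choose n : ℤ) * f n
    = 2 * ∑ n ∈ Finset.range (g + 1), 2 ^ (g - n) * (g.choose n : ℤ) * f n
      + ∑ n ∈ Finset.range (g + 1), 2 ^ (g - n) * (g.choose n : ℤ) * f (n + 1) := by
  rw [Finset.sum_range_succ' _ (g+1)]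
  have key : ∀ n ∈ Finset.range (g+1),
      2 ^ (g + 1 - (n+1)) * ((g+1).choose (n+1) : ℤ) * f (n+1)
      = 2 ^ (g - n) * (g.choose n : ℤ) * f (n+1)
        + 2 ^ (g - n) * (g.choose (n+1) : ℤ) * f (n+1) := by
    intro n _
    have hgn : g + 1 - (n+1) = g - n := by omega
    rw [hgn, Nat.choose_succ_succ]
    push_cast; ring
  rw [Finset.sum_congr rfl key, Finset.sum_add_distrib]
  have h2S : 2 * ∑ n ∈ Finset.range (g + 1), 2 ^ (g - n) * (g.choose n : ℤ) * f n
      = (∑ n ∈ Finset.range (g+1), 2 ^ (g - n) * (g.choose (n+1) : ℤ) * f (n+1))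
        + 2 ^ (g+1) * f 0 := by
    rw [Finset.mul_sum, Finset.sum_range_succ' _ g]
    congr 1
    · rw [Finset.sum_range_succ]
      have hz : 2 ^ (g - g) * ((g.choose (g+1)) : ℤ) * f (g+1) = 0 := by
        rw [Nat.choose_eq_zero_of_lt (by omega)]; push_cast; ring
      rw [hz, add_zero]
      apply Finset.sum_congr rfl
      intro n hn
      have hn' : n < g := Finset.mem_range.mp hn
      have hgn : g - n = (g - (n+1)) + 1 := by omega
      rw [hgn]; push_cast; ring
    · rw [Nat.choose_zero_right, Nat.sub_zero]
      push_cast; ring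
  have hc0 : ((g+1).choose 0 : ℤ) = 1 := by norm_num
  rw [hc0, Nat.sub_zero]
  linarith [h2S]

lemma DP_zero_left (p g : ℕ) : DP p g 0 = 0 := by
  unfold DP
  apply Finset.sum_eq_zero
  intro n _
  rw [dP_zero_left]; ring

lemma DP_p_right (p g : ℕ) : DP p g p = 0 := by
  unfold DP
  apply Finset.sum_eq_zero
  intro n _
  rw [dP_p_right]; ring

lemma DP_rec (p : ℕ) (hp : 0 < p) (g k : ℕ) (hk : 1 ≤ k) :
    DP p (g+1) k = DP p g (k-1) + 2 * DP p g k + DP p g (k+1) := by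
  unfold DP
  have : ∑ n ∈ Finset.range (g + 1 + 1), 2 ^ (g + 1 - n) * ((g+1).choose n : ℤ) * dP p n k
      = 2 * ∑ n ∈ Finset.range (g + 1), 2 ^ (g - n) * (g.choose n : ℤ) * dP p n k
      + ∑ n ∈ Finset.range (g + 1), 2 ^ (g - n) * (g.choose n : ℤ) * dP p (n+1) k :=
    sum_rec g (fun n => dP p n k)
  rw [this]
  have h2 : ∀ n ∈ Finset.range (g+1),
      2 ^ (g - n) * (g.choose n : ℤ) * dP p (n+1) k
      = 2 ^ (g - n) * (g.choose n : ℤ) * dP p n (k-1)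
        + 2 ^ (g - n) * (g.choose n : ℤ) * dP p n (k+1) := by
    intro n _
    rw [dP_rec p n k hp hk]; ring
  rw [Finset.sum_congr rfl h2, Finset.sum_add_distrib]
  ring

lemma catC_zero_eval (j : ℤ) : catC 0 j = (if j = 0 then 1 else 0) - (if j = 1 then 1 else 0) := by
  unfold catC binZ
  rcases lt_trichotomy j 0 with h | h | h
  · rw [if_neg (by omega), if_neg (by omega), if_neg (by omega), if_neg (by omega)]
  · subst h; norm_num
  · rw [if_pos (by omega)]
    by_cases h1 : j = 1
    · subst h1; norm_num
    · rw [if_pos (by omega), if_neg (by omega), if_neg h1,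
        Nat.choose_eq_zero_of_lt (by omega), Nat.choose_eq_zero_of_lt (by omega)]
      norm_num

lemma dP_init (p k : ℕ) (hp : 3 ≤ p) (hk1 : 1 ≤ k) (hk2 : k ≤ p - 1) :
    dP p 0 k = if k = 1 then 1 else 0 := by
  by_cases h : k % 2 = (0 + 1) % 2
  · rw [dP_eq_eAux p 0 k h]
    unfold eAux
    set m : ℤ := (((0:ℕ) : ℤ) + 1 - k) / 2 with hm
    have hm1 : 2 * m = 1 - (k:ℤ) := by omega
    have hk2' : (k:ℤ) ≤ (p:ℤ) - 1 := by
      have : (k:ℤ) ≤ ((p - 1 : ℕ) : ℤ) := by exact_mod_cast hk2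
      omega
    rw [finsum_eq_single _ (0 : ℤ) ?_]
    · rw [catC_zero_eval]
      simp only [mul_zero, add_zero, zero_mul]
      rcases eq_or_ne k 1 with hk | hk
      · subst hk
        have : m = 0 := by omega
        rw [this]; norm_num
      · have hm0 : m ≠ 0 ∧ m ≠ 1 := by
          constructor <;> intro hc <;> omega
        rw [if_neg hm0.1, if_neg hm0.2, if_neg hk]; ring
    · intro s hs
      apply catC_eq_zero
      have hp' : (3:ℤ) ≤ p := by exact_mod_cast hp
      rcases lt_or_gt_of_ne hs with h1 | h1
      · left
        have h2 : s * p ≤ -1 * p :=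
          mul_le_mul_of_nonneg_right (by omega) (by positivity)
        push_cast
        omega
      · right
        have h2 : 1 * (p:ℤ) ≤ s * p :=
          mul_le_mul_of_nonneg_right (by omega) (by positivity)
        push_cast
        omega
  · rw [dP_eq_zero_of_parity p 0 k h, if_neg (by omega)]

def Bmat (p : ℕ) : Matrix (Fin (p-1)) (Fin (p-1)) ℝ :=
  fun i j => if i = j then 2 else if (i:ℕ) + 1 = (j:ℕ) ∨ (j:ℕ) + 1 = (i:ℕ) then 1 else 0

lemma Bmat_nonneg (p : ℕ) (i j : Fin (p-1)) : 0 ≤ Bmat p i j := by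
  unfold Bmat; split_ifs <;> norm_num

lemma Bmat_symm (p : ℕ) (i j : Fin (p-1)) : Bmat p i j = Bmat p j i := by
  unfold Bmat
  simp only [Fin.ext_iff]
  split_ifs with h1 h2 h3 h4 h5 <;> try rfl
  all_goals (exfalso; omega)

/-- decomposition of Bmat into three indicator pieces -/
lemma Bmat_decomp (p : ℕ) (i j : Fin (p-1)) :
    Bmat p i j = (if i = j then 2 else 0) + (if (i:ℕ) + 1 = (j:ℕ) then 1 else 0)
      + (if (j:ℕ) + 1 = (i:ℕ) then 1 else 0) := by
  unfold Bmat
  simp only [Fin.ext_iff]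
  split_ifs <;> first | (exfalso; omega) | norm_num

lemma Bmat_sum (p : ℕ) (hp : 3 ≤ p) (W : ℕ → ℝ) (hW0 : W 0 = 0) (hWp : W p = 0)
    (j : Fin (p-1)) :
    ∑ i : Fin (p-1), W ((i:ℕ)+1) * Bmat p i j
      = W (j:ℕ) + 2 * W ((j:ℕ)+1) + W ((j:ℕ)+2) := by
  have expand : ∀ i : Fin (p-1), W ((i:ℕ)+1) * Bmat p i j
      = (if i = j then W ((i:ℕ)+1) * 2 else 0)
        + (if (i:ℕ) + 1 = (j:ℕ) then W ((i:ℕ)+1) else 0)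
        + (if (j:ℕ) + 1 = (i:ℕ) then W ((i:ℕ)+1) else 0) := by
    intro i
    rw [Bmat_decomp]
    split_ifs <;> ring
  rw [Finset.sum_congr rfl (fun i _ => expand i), Finset.sum_add_distrib,
    Finset.sum_add_distrib]
  have e1 : ∑ i : Fin (p-1), (if i = j then W ((i:ℕ)+1) * 2 else 0)
      = 2 * W ((j:ℕ)+1) := by
    rw [Finset.sum_ite_eq' Finset.univ j (fun i : Fin (p-1) => W ((i:ℕ)+1) * 2)]
    simp only [Finset.mem_univ, if_pos]
    ring
  have e2 : ∑ i : Fin (p-1), (if (i:ℕ) + 1 = (j:ℕ) then W ((i:ℕ)+1) else 0)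
      = W (j:ℕ) := by
    rcases Nat.eq_zero_or_pos (j:ℕ) with hj | hj
    · rw [Finset.sum_eq_zero, hj, hW0]
      intro i _
      rw [if_neg (by omega)]
    · have hjlt : (j:ℕ) - 1 < p - 1 := by omega
      have hcond : ∀ i : Fin (p-1), ((i:ℕ) + 1 = (j:ℕ)) ↔ i = ⟨(j:ℕ)-1, hjlt⟩ := by
        intro i; rw [Fin.ext_iff]; simp only []; omega
      rw [Finset.sum_congr rfl (fun i _ => by rw [if_congr (hcond i) rfl rfl]),
        Finset.sum_ite_eq' Finset.univ _ (fun i : Fin (p-1) => W ((i:ℕ)+1))]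
      simp only [Finset.mem_univ, if_pos]
      congr 1
      omega
  have e3 : ∑ i : Fin (p-1), (if (j:ℕ) + 1 = (i:ℕ) then W ((i:ℕ)+1) else 0)
      = W ((j:ℕ)+2) := by
    rcases eq_or_lt_of_le (Nat.succ_le_of_lt j.isLt) with hj | hj
    · rw [Finset.sum_eq_zero]
      · have h2 : (j:ℕ) + 2 = p := by omega
        rw [h2, hWp]
      · intro i _
        rw [if_neg (by omega)]
    · have hjlt : (j:ℕ) + 1 < p - 1 := hj
      have hcond : ∀ i : Fin (p-1), ((j:ℕ) + 1 = (i:ℕ)) ↔ i = ⟨(j:ℕ)+1, hjlt⟩ := by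
        intro i; rw [Fin.ext_iff]; simp only []; omega
      rw [Finset.sum_congr rfl (fun i _ => by rw [if_congr (hcond i) rfl rfl]),
        Finset.sum_ite_eq' Finset.univ _ (fun i : Fin (p-1) => W ((i:ℕ)+1))]
      simp only [Finset.mem_univ, if_pos]
  rw [e1, e2, e3]
  ring

lemma DP_matrix (p : ℕ) (hp : 3 ≤ p) (g : ℕ) (j : Fin (p-1)) :
    (Bmat p ^ g) ⟨0, by omega⟩ j = (DP p g ((j:ℕ)+1) : ℝ) := by
  induction g generalizing j with
  | zero =>
    rw [pow_zero, Matrix.one_apply]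
    have hDP : DP p 0 ((j:ℕ)+1) = dP p 0 ((j:ℕ)+1) := by
      unfold DP
      rw [Finset.sum_range_one]
      norm_num
    rw [hDP, dP_init p ((j:ℕ)+1) hp (by omega) (by have := j.isLt; omega)]
    by_cases h : (⟨0, by omega⟩ : Fin (p-1)) = j
    · rw [if_pos h, if_pos (by rw [← h]), Int.cast_one]
    · rw [if_neg h, if_neg (by
        intro hc
        exact h (by apply Fin.ext; simp only [Fin.val_mk]; omega) ), Int.cast_zero]
  | succ g ih =>
    rw [pow_succ, Matrix.mul_apply]
    have : ∀ i : Fin (p-1), (Bmat p ^ g) ⟨0, by omega⟩ i * Bmat p i j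
        = ((fun t => (DP p g t : ℝ)) ((i:ℕ)+1)) * Bmat p i j := by
      intro i; rw [ih i]
    rw [Finset.sum_congr rfl (fun i _ => this i),
      Bmat_sum p hp (fun t => (DP p g t : ℝ)) (by simp [DP_zero_left]) (by simp [DP_p_right]) j]
    have hrec := DP_rec p (by omega) g ((j:ℕ)+1) (by omega)
    have h1 : (j:ℕ) + 1 - 1 = (j:ℕ) := by omega
    rw [h1] at hrec
    rw [hrec]
    push_cast
    ring

noncomputable def Vf (p : ℕ) : ℕ → ℝ := fun t => Real.sin (t * (Real.pi / p))

noncomputable def lam (p : ℕ) : ℝ := 2 + 2 * Real.cos (Real.pi / p)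

lemma Vf_zero (p : ℕ) : Vf p 0 = 0 := by simp [Vf]

lemma Vf_p (p : ℕ) (hp : 3 ≤ p) : Vf p p = 0 := by
  unfold Vf
  have hp0 : (p:ℝ) ≠ 0 := by positivity
  have h1 : (p:ℝ) * (Real.pi / p) = Real.pi := by field_simp
  rw [h1, Real.sin_pi]

lemma Vf_pos (p : ℕ) (hp : 3 ≤ p) (t : ℕ) (h1 : 1 ≤ t) (h2 : t ≤ p - 1) :
    0 < Vf p t := by
  unfold Vf
  apply Real.sin_pos_of_pos_of_lt_pi
  · have : (0:ℝ) < Real.pi / p := by positivity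
    have ht : (1:ℝ) ≤ t := by exact_mod_cast h1
    nlinarith
  · have hp0 : (0:ℝ) < (p:ℝ) := by positivity
    have ht : (t:ℝ) < p := by
      have : t < p := by omega
      exact_mod_cast this
    calc (t:ℝ) * (Real.pi / p) < p * (Real.pi / p) := by
          apply mul_lt_mul_of_pos_right ht; positivity
      _ = Real.pi := by field_simp

lemma Vf_le_one (p : ℕ) (t : ℕ) : Vf p t ≤ 1 := Real.sin_le_one _

lemma Vf_rec (p : ℕ) (t : ℕ) :
    Vf p t + Vf p (t + 2) = 2 * Real.cos (Real.pi / p) * Vf p (t + 1) := by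
  unfold Vf
  set θ := Real.pi / p
  have h1 : (t:ℝ) * θ = ((t:ℝ)+1) * θ - θ := by ring
  have h2 : ((t:ℕ)+2 : ℕ) = ((t:ℕ) + 2) := rfl
  push_cast
  have e1 : ((t:ℝ) + 2) * θ = ((t:ℝ)+1) * θ + θ := by ring
  rw [h1, e1, Real.sin_sub, Real.sin_add]
  ring

lemma eigB (p : ℕ) (hp : 3 ≤ p) (t : Fin (p-1)) :
    ∑ i : Fin (p-1), Vf p ((i:ℕ)+1) * Bmat p i t = lam p * Vf p ((t:ℕ)+1) := by
  rw [Bmat_sum p hp (Vf p) (Vf_zero p) (Vf_p p hp) t]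
  have := Vf_rec p (t:ℕ)
  unfold lam
  linarith

lemma eigB_row (p : ℕ) (hp : 3 ≤ p) (t : Fin (p-1)) :
    ∑ j : Fin (p-1), Bmat p t j * Vf p ((j:ℕ)+1) = lam p * Vf p ((t:ℕ)+1) := by
  rw [← eigB p hp t]
  apply Finset.sum_congr rfl
  intro j _
  rw [Bmat_symm, mul_comm]

lemma eig_right_pow (p : ℕ) (hp : 3 ≤ p) (g : ℕ) (i : Fin (p-1)) :
    ∑ j : Fin (p-1), (Bmat p ^ g) i j * Vf p ((j:ℕ)+1)
      = (lam p) ^ g * Vf p ((i:ℕ)+1) := by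
  induction g generalizing i with
  | zero =>
    rw [pow_zero, pow_zero, one_mul]
    have : ∀ j : Fin (p-1), (1 : Matrix (Fin (p-1)) (Fin (p-1)) ℝ) i j * Vf p ((j:ℕ)+1)
        = if j = i then Vf p ((j:ℕ)+1) else 0 := by
      intro j
      rw [Matrix.one_apply]
      by_cases h : i = j
      · rw [if_pos h, if_pos h.symm, one_mul]
      · rw [if_neg h, if_neg (fun hc => h hc.symm), zero_mul]
    rw [Finset.sum_congr rfl (fun j _ => this j),
      Finset.sum_ite_eq' Finset.univ i (fun j : Fin (p-1) => Vf p ((j:ℕ)+1))]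
    simp only [Finset.mem_univ, if_pos]
  | succ g ih =>
    rw [pow_succ']
    have expand : ∀ j : Fin (p-1), (Bmat p * Bmat p ^ g) i j * Vf p ((j:ℕ)+1)
        = ∑ t : Fin (p-1), Bmat p i t * ((Bmat p ^ g) t j * Vf p ((j:ℕ)+1)) := by
      intro j
      rw [Matrix.mul_apply, Finset.sum_mul]
      apply Finset.sum_congr rfl
      intro t _
      ring
    rw [Finset.sum_congr rfl (fun j _ => expand j), Finset.sum_comm]
    have inner : ∀ t : Fin (p-1),
        ∑ j : Fin (p-1), Bmat p i t * ((Bmat p ^ g) t j * Vf p ((j:ℕ)+1))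
        = Bmat p i t * ((lam p)^g * Vf p ((t:ℕ)+1)) := by
      intro t
      rw [← Finset.mul_sum, ih t]
    rw [Finset.sum_congr rfl (fun t _ => inner t)]
    have : ∀ t : Fin (p-1), Bmat p i t * ((lam p)^g * Vf p ((t:ℕ)+1))
        = (lam p)^g * (Bmat p i t * Vf p ((t:ℕ)+1)) := by intro t; ring
    rw [Finset.sum_congr rfl (fun t _ => this t), ← Finset.mul_sum, eigB_row p hp i]
    ring

lemma pow_entries_nonneg (p : ℕ) (g : ℕ) :
    ∀ i j : Fin (p-1), 0 ≤ (Bmat p ^ g) i j := by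
  induction g with
  | zero =>
    intro i j
    rw [pow_zero, Matrix.one_apply]
    split_ifs <;> norm_num
  | succ g ih =>
    intro i j
    rw [pow_succ, Matrix.mul_apply]
    apply Finset.sum_nonneg
    intro t _
    exact mul_nonneg (ih i t) (Bmat_nonneg p t j)

lemma pow_entries_pos (p : ℕ) (hp : 3 ≤ p) :
    ∀ m (i j : Fin (p-1)), (j:ℕ) ≤ (i:ℕ) + m → (i:ℕ) ≤ (j:ℕ) + m →
      0 < (Bmat p ^ m) i j := by
  intro m
  induction m with
  | zero =>
    intro i j h1 h2
    have : i = j := Fin.ext (by omega)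
    subst this
    rw [pow_zero, Matrix.one_apply_eq]
    norm_num
  | succ m ih =>
    intro i j h1 h2
    rw [pow_succ, Matrix.mul_apply]
    have key : ∃ t : Fin (p-1), 0 < (Bmat p ^ m) i t * Bmat p t j := by
      by_cases hc : (j:ℕ) ≤ (i:ℕ) + m ∧ (i:ℕ) ≤ (j:ℕ) + m
      · refine ⟨j, mul_pos (ih i j hc.1 hc.2) ?_⟩
        have : Bmat p j j = 2 := by
          unfold Bmat; rw [if_pos rfl]
        rw [this]; norm_num
      · by_cases hd : (i:ℕ) + m < (j:ℕ)
        · have hj1 : 1 ≤ (j:ℕ) := by omega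
          refine ⟨⟨(j:ℕ)-1, by have := j.isLt; omega⟩, mul_pos (ih i _ ?_ ?_) ?_⟩
          · simp only [Fin.val_mk]; omega
          · simp only [Fin.val_mk]; omega
          · have : Bmat p ⟨(j:ℕ)-1, by have := j.isLt; omega⟩ j = 1 := by
              unfold Bmat
              simp only [Fin.ext_iff, Fin.val_mk]
              rw [if_neg (by omega), if_pos (by omega)]
            rw [this]; norm_num
        · have hd2 : (j:ℕ) + m < (i:ℕ) := by omega
          refine ⟨⟨(j:ℕ)+1, by have := i.isLt; omega⟩, mul_pos (ih i _ ?_ ?_) ?_⟩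
          · simp only [Fin.val_mk]; omega
          · simp only [Fin.val_mk]; omega
          · have : Bmat p ⟨(j:ℕ)+1, by have := i.isLt; omega⟩ j = 1 := by
              unfold Bmat
              simp only [Fin.ext_iff, Fin.val_mk]
              rw [if_neg (by omega), if_pos (Or.inr trivial)]
            rw [this]; norm_num
    obtain ⟨t0, ht0⟩ := key
    calc (0:ℝ) < (Bmat p ^ m) i t0 * Bmat p t0 j := ht0
      _ ≤ ∑ t : Fin (p-1), (Bmat p ^ m) i t * Bmat p t j := by
          apply Finset.single_le_sum (f := fun t : Fin (p-1) => (Bmat p ^ m) i t * Bmat p t j)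
            (fun t _ => mul_nonneg (pow_entries_nonneg p m i t) (Bmat_nonneg p t j))
            (Finset.mem_univ t0)

lemma rpow_root_tendsto_one {b : ℝ} (hb : 0 < b) :
    Filter.Tendsto (fun g : ℕ => b ^ (1 / (g:ℝ))) Filter.atTop (nhds 1) := by
  have heq : (fun g : ℕ => b ^ (1 / (g:ℝ)))
      = fun g : ℕ => Real.exp (Real.log b * (1 / (g:ℝ))) := by
    funext g
    rw [Real.rpow_def_of_pos hb]
  rw [heq]
  have h1 : Filter.Tendsto (fun g : ℕ => Real.log b * (1 / (g:ℝ)))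
      Filter.atTop (nhds 0) := by
    have := tendsto_one_div_atTop_nhds_zero_nat.const_mul (Real.log b)
    rwa [mul_zero] at this
  have := (Real.continuous_exp.tendsto 0).comp h1
  rwa [Real.exp_zero] at this

theorem DP_growth_rate (p : ℕ) (hp : p.Prime) (hodd : Odd p) (k : ℕ)
    (hk1 : 1 ≤ k) (hk2 : k ≤ p - 1) :
    Filter.Tendsto (fun g : ℕ => (DP p g k : ℝ) ^ (1 / (g : ℝ)))
      Filter.atTop (nhds (4 * Real.cos (Real.pi / (2 * p)) ^ 2)) := by
  have hp3 : 3 ≤ p := by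
    have h2 := hp.two_le
    have : p ≠ 2 := by
      intro hc
      rw [hc, Nat.odd_iff] at hodd
      omega
    omega
  clear hp hodd
  -- basic positivity facts
  have hppos : (0:ℝ) < p := by positivity
  have hcos : 0 < Real.cos (Real.pi / (2 * p)) := by
    apply Real.cos_pos_of_mem_Ioo
    constructor
    · have : (0:ℝ) < Real.pi / (2 * p) := by positivity
      have := Real.pi_pos
      nlinarith
    · apply div_lt_div_of_pos_left Real.pi_pos (by norm_num)
      have : (3:ℝ) ≤ p := by exact_mod_cast hp3
      nlinarith
  have hlam_eq : lam p = 4 * Real.cos (Real.pi / (2 * p)) ^ 2 := by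
    unfold lam
    have h2 : Real.pi / p = 2 * (Real.pi / (2 * p)) := by
      field_simp
    rw [h2, Real.cos_two_mul]
    ring
  have hlam : 0 < lam p := by rw [hlam_eq]; positivity
  -- index setup
  set r0 : Fin (p-1) := ⟨0, by omega⟩ with hr0
  set κ : Fin (p-1) := ⟨k-1, by omega⟩ with hκ
  have hκ1 : (κ:ℕ) + 1 = k := by simp only [hκ, Fin.val_mk]; omega
  have hr01 : (r0:ℕ) + 1 = 1 := by simp only [hr0, Fin.val_mk]
  have ha : ∀ g, (DP p g k : ℝ) = (Bmat p ^ g) r0 κ := by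
    intro g
    rw [DP_matrix p hp3 g κ, hκ1]
  -- values of the eigenvector
  have hv1 : 0 < Vf p 1 := Vf_pos p hp3 1 le_rfl (by omega)
  have hvk : 0 < Vf p k := Vf_pos p hp3 k hk1 hk2
  have hvnonneg : ∀ t : Fin (p-1), 0 ≤ Vf p ((t:ℕ)+1) :=
    fun t => le_of_lt (Vf_pos p hp3 _ (by omega) (by have := t.isLt; omega))
  -- upper bound
  set Cc : ℝ := Vf p 1 / Vf p k with hCc
  have hCpos : 0 < Cc := by positivity
  have hub : ∀ g, (DP p g k : ℝ) ≤ Cc * lam p ^ g := by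
    intro g
    have h1 : (Bmat p ^ g) r0 κ * Vf p ((κ:ℕ)+1)
        ≤ ∑ j : Fin (p-1), (Bmat p ^ g) r0 j * Vf p ((j:ℕ)+1) := by
      apply Finset.single_le_sum
        (f := fun j : Fin (p-1) => (Bmat p ^ g) r0 j * Vf p ((j:ℕ)+1))
        (fun j _ => mul_nonneg (pow_entries_nonneg p g r0 j) (hvnonneg j))
        (Finset.mem_univ κ)
    rw [eig_right_pow p hp3 g r0, hr01, hκ1] at h1
    rw [ha g]
    rw [hCc, div_mul_eq_mul_div, le_div_iff₀ hvk]
    calc (Bmat p ^ g) r0 κ * Vf p k ≤ lam p ^ g * Vf p 1 := h1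
      _ = Vf p 1 * lam p ^ g := by ring
  -- minimal entry of B^p
  have hne : Nonempty (Fin (p-1) × Fin (p-1)) := ⟨⟨⟨0, by omega⟩, ⟨0, by omega⟩⟩⟩
  obtain ⟨q, hq⟩ := Finite.exists_min
    (fun q : Fin (p-1) × Fin (p-1) => (Bmat p ^ p) q.1 q.2)
  set c0 : ℝ := (Bmat p ^ p) q.1 q.2 with hc0def
  have hc0pos : 0 < c0 :=
    pow_entries_pos p hp3 p q.1 q.2 (by have := q.2.isLt; omega) (by have := q.1.isLt; omega)
  have hc0le : ∀ i j : Fin (p-1), c0 ≤ (Bmat p ^ p) i j := fun i j => hq (i, j)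
  -- lower bound for shifted index
  have hlow0 : ∀ g, c0^2 * (Vf p 1)^2 * lam p ^ g ≤ (DP p (g + 2*p) k : ℝ) := by
    intro g
    rw [ha (g + 2*p)]
    have hsplit : Bmat p ^ (g + 2*p) = Bmat p ^ p * (Bmat p ^ g * Bmat p ^ p) := by
      rw [← pow_add, ← pow_add]
      congr 1
      omega
    rw [hsplit, Matrix.mul_apply]
    have hentry : ∀ i : Fin (p-1), (Bmat p ^ g * Bmat p ^ p) i κ
        = ∑ t : Fin (p-1), (Bmat p ^ g) i t * (Bmat p ^ p) t κ := fun i => Matrix.mul_apply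
    calc c0^2 * (Vf p 1)^2 * lam p ^ g
        ≤ c0^2 * (lam p ^ g * ∑ i : Fin (p-1), Vf p ((i:ℕ)+1)^2) := by
          have hsum : (Vf p 1)^2 ≤ ∑ i : Fin (p-1), Vf p ((i:ℕ)+1)^2 := by
            have := Finset.single_le_sum
              (f := fun i : Fin (p-1) => Vf p ((i:ℕ)+1)^2)
              (fun i _ => sq_nonneg _) (Finset.mem_univ r0)
            simpa only [hr01] using this
          have h1 : (0:ℝ) ≤ c0^2 * lam p ^ g := by positivity
          nlinarith [sq_nonneg c0, pow_pos hlam g]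
      _ = c0^2 * ∑ i : Fin (p-1), Vf p ((i:ℕ)+1) * (lam p ^ g * Vf p ((i:ℕ)+1)) := by
          congr 1
          rw [Finset.mul_sum]
          apply Finset.sum_congr rfl
          intro i _
          ring
      _ = c0^2 * ∑ i : Fin (p-1), Vf p ((i:ℕ)+1) *
            (∑ t : Fin (p-1), (Bmat p ^ g) i t * Vf p ((t:ℕ)+1)) := by
          congr 1
          apply Finset.sum_congr rfl
          intro i _
          rw [eig_right_pow p hp3 g i]
      _ ≤ c0^2 * ∑ i : Fin (p-1), ∑ t : Fin (p-1), (Bmat p ^ g) i t := by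
          apply mul_le_mul_of_nonneg_left _ (sq_nonneg c0)
          apply Finset.sum_le_sum
          intro i _
          rw [Finset.mul_sum]
          apply Finset.sum_le_sum
          intro t _
          have hBnn := pow_entries_nonneg p g i t
          have h1 := hvnonneg i
          have h2 := hvnonneg t
          have h3 := Vf_le_one p ((i:ℕ)+1)
          have h4 := Vf_le_one p ((t:ℕ)+1)
          calc Vf p ((i:ℕ)+1) * ((Bmat p ^ g) i t * Vf p ((t:ℕ)+1))
              ≤ 1 * ((Bmat p ^ g) i t * Vf p ((t:ℕ)+1)) :=
                mul_le_mul_of_nonneg_right h3 (mul_nonneg hBnn h2)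
            _ = (Bmat p ^ g) i t * Vf p ((t:ℕ)+1) := one_mul _
            _ ≤ (Bmat p ^ g) i t * 1 := mul_le_mul_of_nonneg_left h4 hBnn
            _ = (Bmat p ^ g) i t := mul_one _
      _ ≤ ∑ i : Fin (p-1), (Bmat p ^ p) r0 i * (Bmat p ^ g * Bmat p ^ p) i κ := by
          rw [Finset.mul_sum]
          apply Finset.sum_le_sum
          intro i _
          rw [hentry i, Finset.mul_sum, Finset.mul_sum]
          apply Finset.sum_le_sum
          intro t _
          have hBnn := pow_entries_nonneg p g i t
          have h1 := hc0le r0 i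
          have h2 := hc0le t κ
          have hA : 0 ≤ (Bmat p ^ p) r0 i * (Bmat p ^ g) i t :=
            mul_nonneg (pow_entries_nonneg p p r0 i) hBnn
          calc c0^2 * (Bmat p ^ g) i t = (c0 * (Bmat p ^ g) i t) * c0 := by ring
            _ ≤ ((Bmat p ^ p) r0 i * (Bmat p ^ g) i t) * (Bmat p ^ p) t κ :=
                mul_le_mul (mul_le_mul_of_nonneg_right h1 hBnn) h2 hc0pos.le hA
            _ = (Bmat p ^ p) r0 i * ((Bmat p ^ g) i t * (Bmat p ^ p) t κ) := by ring
  -- combined lower bound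
  set cl : ℝ := c0^2 * (Vf p 1)^2 / lam p ^ (2*p) with hcl
  have hclpos : 0 < cl := by positivity
  have hlow : ∀ g, 2*p ≤ g → cl * lam p ^ g ≤ (DP p g k : ℝ) := by
    intro g hg
    have h1 := hlow0 (g - 2*p)
    have h2 : g - 2*p + 2*p = g := by omega
    rw [h2] at h1
    have h3 : cl * lam p ^ g = c0^2 * (Vf p 1)^2 * lam p ^ (g - 2*p) := by
      rw [hcl]
      rw [div_mul_eq_mul_div, div_eq_iff (ne_of_gt (by positivity))]
      have hsp : lam p ^ g = lam p ^ (g - 2*p) * lam p ^ (2*p) := by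
        rw [← pow_add]; congr 1; omega
      rw [hsp]; ring
    rw [h3]
    exact h1
  -- final squeeze
  rw [← hlam_eq]
  have hlower_t : Filter.Tendsto (fun g : ℕ => cl ^ (1/(g:ℝ)) * lam p)
      Filter.atTop (nhds (lam p)) := by
    have := (rpow_root_tendsto_one hclpos).mul_const (lam p)
    rwa [one_mul] at this
  have hupper_t : Filter.Tendsto (fun g : ℕ => Cc ^ (1/(g:ℝ)) * lam p)
      Filter.atTop (nhds (lam p)) := by
    have := (rpow_root_tendsto_one hCpos).mul_const (lam p)
    rwa [one_mul] at this
  apply tendsto_of_tendsto_of_tendsto_of_le_of_le' hlower_t hupper_t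
  · -- eventual lower bound
    filter_upwards [Filter.eventually_ge_atTop (2*p + 1)] with g hg
    have hg0 : (g:ℝ) ≠ 0 := by
      have : 0 < g := by omega
      positivity
    have hlb := hlow g (by omega)
    have hpow : (cl * lam p ^ g) ^ (1/(g:ℝ)) = cl ^ (1/(g:ℝ)) * lam p := by
      rw [Real.mul_rpow (le_of_lt hclpos) (by positivity)]
      congr 1
      rw [← Real.rpow_natCast (lam p) g, ← Real.rpow_mul (le_of_lt hlam)]
      rw [mul_one_div_cancel hg0, Real.rpow_one]
    rw [← hpow]
    apply Real.rpow_le_rpow (by positivity) hlb (by positivity)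
  · -- eventual upper bound
    filter_upwards [Filter.eventually_ge_atTop (2*p + 1)] with g hg
    have hg0 : (g:ℝ) ≠ 0 := by
      have : 0 < g := by omega
      positivity
    have hub' := hub g
    have hlb := hlow g (by omega)
    have hpow : (Cc * lam p ^ g) ^ (1/(g:ℝ)) = Cc ^ (1/(g:ℝ)) * lam p := by
      rw [Real.mul_rpow (le_of_lt hCpos) (by positivity)]
      congr 1
      rw [← Real.rpow_natCast (lam p) g, ← Real.rpow_mul (le_of_lt hlam)]
      rw [mul_one_div_cancel hg0, Real.rpow_one]
    rw [← hpow]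
    apply Real.rpow_le_rpow _ hub' (by positivity)
    calc (0:ℝ) ≤ cl * lam p ^ g := by positivity
      _ ≤ (DP p g k : ℝ) := hlb
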